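/- Let S ⊆ B with 0 < π(S) ≤ 1/2. Then the spectral gap satisfies Δ_H ≤ 2(‖H‖ − E₀)·π(∂S)/π(S). -/

import Mathlib

open Matrix ComplexConjugate


open scoped BigOperators ComplexOrder

/-- The ℓ²-operator norm of a matrix over ℂ. -/
noncomputable def opNorm {B : Type*} [Fintype B] [DecidableEq B] (H : Matrix B B ℂ) : ℝ :=
  ‖Matrix.toEuclideanCLM (𝕜 := ℂ) H‖

/-- The ground-state probability measure of a subset `S`. -/
noncomputable def piS {B : Type*} (ψ : B → ℂ) (S : Finset B) : ℝ :=
  ∑ z ∈ S, ‖ψ z‖ ^ 2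

open scoped Classical in
/-- The interior boundary `∂S` of the set `S` with respect to the matrix `H`. -/
noncomputable def bdry {B : Type*} [Fintype B] (H : Matrix B B ℂ) (S : Finset B) : Finset B :=
  S.filter (fun x => ∃ y ∉ S, H x y ≠ 0)

section Aux

variable {B : Type*} [Fintype B] [DecidableEq B]

/-- coordinates of `v` w.r.t. the eigenvector basis -/
noncomputable def coord {H : Matrix B B ℂ} (hH : H.IsHermitian) (v : B → ℂ) (j : B) : ℂ :=
  star ⇑(hH.eigenvectorBasis j) ⬝ᵥ v

lemma parseval {H : Matrix B B ℂ} (hH : H.IsHermitian) (x y : B → ℂ) :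
    star x ⬝ᵥ y = ∑ j, conj (coord hH x j) * coord hH y j := by
  have h1 : star x ⬝ᵥ y =
      (inner ℂ ((WithLp.equiv 2 _).symm x) ((WithLp.equiv 2 _).symm y) : ℂ) := by
    rw [dotProduct_comm]; rfl
  rw [h1, ← (hH.eigenvectorBasis).repr.inner_map_map]
  rw [EuclideanSpace.inner_eq_star_dotProduct]
  simp only [dotProduct, Pi.star_apply, RCLike.star_def]
  congr 1
  ext j
  rw [OrthonormalBasis.repr_apply_apply, OrthonormalBasis.repr_apply_apply]
  rw [EuclideanSpace.inner_eq_star_dotProduct, EuclideanSpace.inner_eq_star_dotProduct]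
  rw [mul_comm]; unfold coord
  rw [dotProduct_comm (star _), dotProduct_comm (star _)]
  rfl

lemma coord_mulVec {H : Matrix B B ℂ} (hH : H.IsHermitian) (v : B → ℂ) (j : B) :
    coord hH (H *ᵥ v) j = (hH.eigenvalues j : ℂ) * coord hH v j := by
  unfold coord
  rw [Matrix.dotProduct_mulVec]
  have h2 : star ⇑(hH.eigenvectorBasis j) ᵥ* H = star (H *ᵥ ⇑(hH.eigenvectorBasis j)) := by
    rw [Matrix.star_mulVec, hH.eq]
  rw [h2, hH.mulVec_eigenvectorBasis]
  have : star (hH.eigenvalues j • ⇑(hH.eigenvectorBasis j))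
      = hH.eigenvalues j • star ⇑(hH.eigenvectorBasis j) := by
    rw [star_smul, star_trivial]
  rw [this, smul_dotProduct, Complex.real_smul]

lemma parseval_norm {H : Matrix B B ℂ} (hH : H.IsHermitian) (x : B → ℂ) :
    ∑ z, ‖x z‖ ^ 2 = ∑ j, ‖coord hH x j‖ ^ 2 := by
  have := parseval hH x x
  have hl : star x ⬝ᵥ x = ((∑ z, ‖x z‖ ^ 2 : ℝ) : ℂ) := by
    simp [dotProduct, Complex.normSq_eq_norm_sq, ← Complex.normSq_eq_conj_mul_self]
  have hr : (∑ j, conj (coord hH x j) * coord hH x j) = ((∑ j, ‖coord hH x j‖ ^ 2 : ℝ) : ℂ) := by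
    simp [Complex.normSq_eq_norm_sq, ← Complex.normSq_eq_conj_mul_self]
  rw [hl, hr] at this
  exact_mod_cast this

/-- The shifted bilinear form `⟨x, (H - e₀)y⟩`. -/
noncomputable def beta (H : Matrix B B ℂ) (e0 : ℝ) (x y : B → ℂ) : ℂ :=
  star x ⬝ᵥ (H *ᵥ y) - (e0 : ℂ) * (star x ⬝ᵥ y)

lemma beta_coord {H : Matrix B B ℂ} (hH : H.IsHermitian) (e0 : ℝ) (x y : B → ℂ) :
    beta H e0 x y
      = ∑ j, ((hH.eigenvalues j - e0 : ℝ) : ℂ) * (conj (coord hH x j) * coord hH y j) := by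
  unfold beta
  rw [parseval hH x (H *ᵥ y), parseval hH x y, Finset.mul_sum, ← Finset.sum_sub_distrib]
  refine Finset.sum_congr rfl fun j _ => ?_
  rw [coord_mulVec]
  push_cast
  ring

lemma beta_conj {H : Matrix B B ℂ} (hH : H.IsHermitian) (e0 : ℝ) (x y : B → ℂ) :
    beta H e0 y x = conj (beta H e0 x y) := by
  rw [beta_coord hH, beta_coord hH, map_sum]
  refine Finset.sum_congr rfl fun j _ => ?_
  rw [_root_.map_mul, _root_.map_mul, Complex.conj_conj, Complex.conj_ofReal]
  ring

lemma beta_re {H : Matrix B B ℂ} (hH : H.IsHermitian) (e0 : ℝ) (x : B → ℂ) :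
    (beta H e0 x x).re = ∑ j, (hH.eigenvalues j - e0) * ‖coord hH x j‖ ^ 2 := by
  rw [beta_coord hH, Complex.re_sum]
  refine Finset.sum_congr rfl fun j _ => ?_
  rw [show (starRingEnd ℂ) (coord hH x j) * coord hH x j
      = ((‖coord hH x j‖ ^ 2 : ℝ) : ℂ) by
    rw [← Complex.normSq_eq_conj_mul_self, Complex.normSq_eq_norm_sq]]
  rw [← Complex.ofReal_mul, Complex.ofReal_re]

noncomputable def opNorm' (H : Matrix B B ℂ) : ℝ :=
  ‖Matrix.toEuclideanCLM (𝕜 := ℂ) H‖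

lemma abs_eig_le_opNorm {H : Matrix B B ℂ} (hH : H.IsHermitian) (b : B) :
    |hH.eigenvalues b| ≤ opNorm' H := by
  have hu : ‖hH.eigenvectorBasis b‖ = 1 := hH.eigenvectorBasis.orthonormal.1 b
  have h1 : Matrix.toEuclideanCLM (𝕜 := ℂ) H (hH.eigenvectorBasis b)
      = (WithLp.equiv 2 (B → ℂ)).symm (H *ᵥ ⇑(hH.eigenvectorBasis b)) := by
    have h0 := Matrix.ofLp_toEuclideanCLM (n := B) (𝕜 := ℂ) H (hH.eigenvectorBasis b)
    rw [← h0]; rfl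
  have h2 : ‖Matrix.toEuclideanCLM (𝕜 := ℂ) H (hH.eigenvectorBasis b)‖ = |hH.eigenvalues b| := by
    rw [h1, hH.mulVec_eigenvectorBasis]
    rw [show (WithLp.equiv 2 (B → ℂ)).symm (hH.eigenvalues b • ⇑(hH.eigenvectorBasis b))
        = hH.eigenvalues b • hH.eigenvectorBasis b from rfl]
    rw [norm_smul, hu, mul_one, Real.norm_eq_abs]
  calc |hH.eigenvalues b| = ‖Matrix.toEuclideanCLM (𝕜 := ℂ) H (hH.eigenvectorBasis b)‖ := h2.symm
    _ ≤ opNorm' H * ‖hH.eigenvectorBasis b‖ := (Matrix.toEuclideanCLM (𝕜 := ℂ) H).le_opNorm _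
    _ = opNorm' H := by rw [hu, mul_one]

lemma conj_mul_self' (a : ℂ) : conj a * a = ((‖a‖ ^ 2 : ℝ) : ℂ) := by
  rw [← Complex.normSq_eq_conj_mul_self, Complex.normSq_eq_norm_sq]

lemma beta_sub_left (H : Matrix B B ℂ) (e0 : ℝ) (x x' y : B → ℂ) :
    beta H e0 (x - x') y = beta H e0 x y - beta H e0 x' y := by
  unfold beta
  rw [star_sub, sub_dotProduct, sub_dotProduct]
  ring

lemma beta_sub_right (H : Matrix B B ℂ) (e0 : ℝ) (x y y' : B → ℂ) :
    beta H e0 x (y - y') = beta H e0 x y - beta H e0 x y' := by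
  unfold beta
  rw [Matrix.mulVec_sub, dotProduct_sub, dotProduct_sub]
  ring

lemma beta_smul_left (H : Matrix B B ℂ) (e0 : ℝ) (c : ℂ) (x y : B → ℂ) :
    beta H e0 (c • x) y = conj c * beta H e0 x y := by
  unfold beta
  rw [star_smul, smul_dotProduct, smul_dotProduct]
  simp only [smul_eq_mul, RCLike.star_def]
  ring

lemma beta_re_cs {H : Matrix B B ℂ} (hH : H.IsHermitian) (e0 : ℝ)
    (hle : ∀ j, e0 ≤ hH.eigenvalues j) (x y : B → ℂ) :
    (beta H e0 x y).re ≤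
      Real.sqrt ((beta H e0 x x).re) * Real.sqrt ((beta H e0 y y).re) := by
  rw [beta_coord hH, beta_re hH, beta_re hH, Complex.re_sum]
  set μ : B → ℝ := fun j => hH.eigenvalues j - e0 with hμdef
  have hμ : ∀ j, 0 ≤ μ j := fun j => sub_nonneg.2 (hle j)
  have step1 : ∑ j, (((μ j : ℝ) : ℂ) * (conj (coord hH x j) * coord hH y j)).re
      ≤ ∑ j, (Real.sqrt (μ j) * ‖coord hH x j‖) * (Real.sqrt (μ j) * ‖coord hH y j‖) := by
    refine Finset.sum_le_sum fun j _ => ?_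
    have h1 : (((μ j : ℝ) : ℂ) * (conj (coord hH x j) * coord hH y j)).re
        = μ j * (conj (coord hH x j) * coord hH y j).re := by
      simp [Complex.mul_re]
    have h2 : (conj (coord hH x j) * coord hH y j).re ≤ ‖coord hH x j‖ * ‖coord hH y j‖ := by
      calc (conj (coord hH x j) * coord hH y j).re
          ≤ ‖conj (coord hH x j) * coord hH y j‖ := Complex.re_le_norm _
        _ = ‖coord hH x j‖ * ‖coord hH y j‖ := by
            rw [norm_mul, Complex.norm_conj]
    have h3 : Real.sqrt (μ j) * Real.sqrt (μ j) = μ j := Real.mul_self_sqrt (hμ j)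
    rw [h1]
    calc μ j * (conj (coord hH x j) * coord hH y j).re
        ≤ μ j * (‖coord hH x j‖ * ‖coord hH y j‖) := by
          exact mul_le_mul_of_nonneg_left h2 (hμ j)
      _ = (Real.sqrt (μ j) * ‖coord hH x j‖) * (Real.sqrt (μ j) * ‖coord hH y j‖) := by
          linear_combination (-(‖coord hH x j‖ * ‖coord hH y j‖)) * h3
  refine step1.trans ?_
  set f : B → ℝ := fun j => Real.sqrt (μ j) * ‖coord hH x j‖
  set g : B → ℝ := fun j => Real.sqrt (μ j) * ‖coord hH y j‖
  have hcs := Finset.sum_mul_sq_le_sq_mul_sq Finset.univ f g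
  have hf2 : ∀ j, f j ^ 2 = μ j * ‖coord hH x j‖ ^ 2 := fun j => by
    simp only [f, mul_pow, Real.sq_sqrt (hμ j)]
  have hg2 : ∀ j, g j ^ 2 = μ j * ‖coord hH y j‖ ^ 2 := fun j => by
    simp only [g, mul_pow, Real.sq_sqrt (hμ j)]
  calc ∑ j, f j * g j ≤ Real.sqrt ((∑ j, f j * g j) ^ 2) := by
        rw [Real.sqrt_sq_eq_abs]; exact le_abs_self _
    _ ≤ Real.sqrt ((∑ j, f j ^ 2) * ∑ j, g j ^ 2) := Real.sqrt_le_sqrt hcs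
    _ = Real.sqrt (∑ j, μ j * ‖coord hH x j‖ ^ 2) * Real.sqrt (∑ j, μ j * ‖coord hH y j‖ ^ 2) := by
        rw [Real.sqrt_mul (Finset.sum_nonneg fun j _ => sq_nonneg _)]
        simp_rw [hf2, hg2]

lemma beta_smul_right (H : Matrix B B ℂ) (e0 : ℝ) (c : ℂ) (x y : B → ℂ) :
    beta H e0 x (c • y) = c * beta H e0 x y := by
  unfold beta
  rw [Matrix.mulVec_smul, dotProduct_smul, dotProduct_smul]
  simp only [smul_eq_mul]
  ring


end Aux

open scoped Classical in
lemma mem_bdry {B : Type*} [Fintype B] {H : Matrix B B ℂ} {S : Finset B} {x : B} :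
    x ∈ bdry H S ↔ x ∈ S ∧ ∃ y, y ∉ S ∧ H x y ≠ 0 := by
  simp [bdry]


/-- Theorem 1 of the paper: the spectral gap is bounded above by twice
`(‖H‖ - E₀)` times the vertex-expansion ratio `π(∂S)/π(S)` of any set `S`
with `0 < π(S) ≤ 1/2`. -/
theorem stmt_0 {B : Type*} [Fintype B] [DecidableEq B]
    (H : Matrix B B ℂ) (hH : H.IsHermitian) (hPSD : H.PosSemidef)
    -- `E` enumerates the eigenvalues of `H` (with multiplicity) in increasing order:
    (E : ℕ → ℝ) (hmono : Monotone E)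
    (henum : ∃ σ : Fin (Fintype.card B) ≃ B,
      ∀ i : Fin (Fintype.card B), E i = hH.eigenvalues (σ i))
    -- `ψ` is a unit-norm ground state:
    (ψ : B → ℂ) (hψnorm : ∑ z, ‖ψ z‖ ^ 2 = 1)
    (hground : H.mulVec ψ = (E 0 : ℂ) • ψ)
    (S : Finset B) (hS0 : 0 < piS ψ S) (hS12 : piS ψ S ≤ 1 / 2) :
    E 1 - E 0 ≤ 2 * (opNorm H - E 0) * (piS ψ (bdry H S) / piS ψ S) := by
  classical
  obtain ⟨σ, hσ⟩ := henum
  -- B is nonempty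
  have hBne : Nonempty B := by
    by_contra h
    rw [not_nonempty_iff] at h
    rw [Finset.univ_eq_empty, Finset.sum_empty] at hψnorm
    norm_num at hψnorm
  have hcard : 0 < Fintype.card B := Fintype.card_pos
  set i0 : Fin (Fintype.card B) := ⟨0, hcard⟩ with hi0
  -- eigenvalue bounds
  have hEmin : ∀ b, E 0 ≤ hH.eigenvalues b := by
    intro b
    have h := hσ (σ.symm b)
    rw [Equiv.apply_symm_apply] at h
    rw [← h]
    exact hmono (Nat.zero_le _)
  have hEmax : ∀ b, hH.eigenvalues b ≤ opNorm H :=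
    fun b => le_trans (le_abs_self _) (abs_eig_le_opNorm hH b)
  have hop0 : E 0 ≤ opNorm H := by
    have h : E 0 = hH.eigenvalues (σ i0) := hσ i0
    rw [h]; exact hEmax _
  have hpiS_nonneg : ∀ T : Finset B, 0 ≤ piS ψ T :=
    fun T => Finset.sum_nonneg fun z _ => sq_nonneg _
  -- trivial case
  by_cases hgap : E 1 ≤ E 0
  · have : 0 ≤ 2 * (opNorm H - E 0) * (piS ψ (bdry H S) / piS ψ S) := by
      apply mul_nonneg
      · apply mul_nonneg; norm_num; linarith
      · exact div_nonneg (hpiS_nonneg _) (hpiS_nonneg _)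
    linarith
  push_neg at hgap
  -- main case
  set p : ℝ := piS ψ S with hp
  set φ : B → ℂ := fun z => if z ∈ S then ψ z else 0 with hφ
  set dφ : B → ℂ := fun z => if z ∈ bdry H S then ψ z else 0 with hdφ
  set χ : B → ℂ := fun z => if z ∈ S then 0 else ψ z with hχ
  set v : B → ℂ := φ - (p : ℂ) • ψ with hv
  have hbdry_sub : ∀ z, z ∈ bdry H S → z ∈ S := by
    intro z hz
    exact (mem_bdry.mp hz).1
  have hψχ : χ = ψ - φ := by
    funext z
    by_cases hzS : z ∈ S <;> simp [hχ, hφ, hzS]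
  -- dot products with ψ
  have hdot_self : ∀ x : B → ℂ, star x ⬝ᵥ x = ((∑ z, ‖x z‖ ^ 2 : ℝ) : ℂ) := by
    intro x
    simp only [dotProduct, Pi.star_apply, RCLike.star_def, Complex.ofReal_sum]
    exact Finset.sum_congr rfl fun z _ => conj_mul_self' _
  have hψψ : star ψ ⬝ᵥ ψ = 1 := by rw [hdot_self, hψnorm]; norm_num
  have hψφ : star ψ ⬝ᵥ φ = (p : ℂ) := by
    simp only [dotProduct, Pi.star_apply, RCLike.star_def, hφ, mul_ite, mul_zero]
    rw [Finset.sum_ite_mem, Finset.univ_inter]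
    rw [show (p : ℂ) = ((∑ z ∈ S, ‖ψ z‖ ^ 2 : ℝ) : ℂ) from rfl, Complex.ofReal_sum]
    exact Finset.sum_congr rfl fun z _ => conj_mul_self' _
  -- beta kills ψ
  have hβψr : ∀ y : B → ℂ, beta H (E 0) y ψ = 0 := by
    intro y
    unfold beta
    rw [hground, dotProduct_smul, smul_eq_mul]
    ring
  have hβψl : ∀ y : B → ℂ, beta H (E 0) ψ y = 0 := by
    intro y
    rw [beta_conj hH, hβψr, map_zero]
  -- beta v v = beta φ φ
  have hβvφ : beta H (E 0) v v = beta H (E 0) φ φ := by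
    rw [hv]
    simp only [beta_sub_left, beta_sub_right, beta_smul_left, beta_smul_right,
      hβψl, hβψr, mul_zero, sub_zero]
  -- boundary: beta (φ - dφ) φ = 0
  have hw0 : beta H (E 0) (φ - dφ) φ = 0 := by
    have hsupp : ∀ z, (φ - dφ) z ≠ 0 → z ∈ S ∧ z ∉ bdry H S := by
      intro z hz
      by_cases hzS : z ∈ S
      · refine ⟨hzS, fun hzb => ?_⟩
        apply hz
        simp [hφ, hdφ, hzS, hzb]
      · exfalso; apply hz
        have : z ∉ bdry H S := fun h => hzS (hbdry_sub z h)
        simp [hφ, hdφ, hzS, this]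
    have hexp : beta H (E 0) (φ - dφ) φ
        = beta H (E 0) (φ - dφ) ψ - beta H (E 0) (φ - dφ) χ := by
      rw [← beta_sub_right]
      congr 1
      rw [hψχ]; ring
    rw [hexp, hβψr]
    have hχ0 : beta H (E 0) (φ - dφ) χ = 0 := by
      unfold beta
      have hd1 : star (φ - dφ) ⬝ᵥ χ = 0 := by
        apply Finset.sum_eq_zero
        intro z _
        simp only [Pi.star_apply]
        by_cases hzS : z ∈ S
        · have : χ z = 0 := by simp [hχ, hzS]
          rw [this, mul_zero]
        · have : (φ - dφ) z = 0 := by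
            by_contra h
            exact hzS (hsupp z h).1
          rw [this, star_zero, zero_mul]
      have hd2 : star (φ - dφ) ⬝ᵥ (H *ᵥ χ) = 0 := by
        apply Finset.sum_eq_zero
        intro z _
        simp only [Pi.star_apply]
        by_cases h : (φ - dφ) z = 0
        · rw [h, star_zero, zero_mul]
        · obtain ⟨hzS, hzb⟩ := hsupp z h
          have hmv : (H *ᵥ χ) z = 0 := by
            apply Finset.sum_eq_zero
            intro y _
            by_cases hyS : y ∈ S
            · have : χ y = 0 := by simp [hχ, hyS]
              rw [this, mul_zero]
            · have : H z y = 0 := by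
                by_contra hH0
                exact hzb (mem_bdry.mpr ⟨hzS, y, hyS, hH0⟩)
              simp [this]
          rw [hmv, mul_zero]
      rw [hd1, hd2, mul_zero, sub_zero]
    rw [hχ0]
    ring

  have hβφdφ : beta H (E 0) φ φ = beta H (E 0) dφ φ := by
    have := beta_sub_left H (E 0) φ dφ φ
    rw [hw0] at this
    linear_combination -this
  -- eigenvalues away from the ground index are at least E 1
  have hgt : ∀ j, j ≠ σ i0 → E 1 ≤ hH.eigenvalues j := by
    intro j hj
    have h := hσ (σ.symm j)
    rw [Equiv.apply_symm_apply] at h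
    rw [← h]
    apply hmono
    have hne : σ.symm j ≠ i0 := fun h' => hj (by rw [← Equiv.apply_symm_apply σ j, h'])
    exact Nat.one_le_iff_ne_zero.mpr fun h0 => hne (Fin.ext h0)
  -- coordinates of ψ vanish away from the ground index
  have hcoord_ground : ∀ j, (hH.eigenvalues j : ℂ) * coord hH ψ j
      = (E 0 : ℂ) * coord hH ψ j := by
    intro j
    have h := coord_mulVec hH ψ j
    rw [hground] at h
    have h2 : coord hH ((E 0 : ℂ) • ψ) j = (E 0 : ℂ) * coord hH ψ j := by
      unfold coord
      rw [dotProduct_smul, smul_eq_mul]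
    rw [h2] at h
    exact h.symm
  have hψc : ∀ j, j ≠ σ i0 → coord hH ψ j = 0 := by
    intro j hj
    have hEj := hgt j hj
    have hne : ((hH.eigenvalues j - E 0 : ℝ) : ℂ) ≠ 0 := by
      simp only [ne_eq, Complex.ofReal_eq_zero, sub_eq_zero]
      intro hE
      linarith
    have hz : ((hH.eigenvalues j - E 0 : ℝ) : ℂ) * coord hH ψ j = 0 := by
      push_cast
      linear_combination hcoord_ground j
    rcases mul_eq_zero.mp hz with h | h
    · exact absurd h hne
    · exact h
  have hψ0 : coord hH ψ (σ i0) ≠ 0 := by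
    intro h0
    have hall : ∀ j, coord hH ψ j = 0 := by
      intro j
      by_cases hj : j = σ i0
      · rw [hj]; exact h0
      · exact hψc j hj
    have hpn := parseval_norm hH ψ
    rw [hψnorm] at hpn
    simp [hall] at hpn
  -- v is orthogonal to ψ
  have hψv : star ψ ⬝ᵥ v = 0 := by
    rw [hv]
    rw [show star ψ ⬝ᵥ (φ - (p : ℂ) • ψ) = star ψ ⬝ᵥ φ - (p : ℂ) * (star ψ ⬝ᵥ ψ) by
      rw [dotProduct_sub, dotProduct_smul, smul_eq_mul]]
    rw [hψφ, hψψ]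
    ring
  have hcv0 : coord hH v (σ i0) = 0 := by
    have hp2 := parseval hH ψ v
    rw [hψv, Finset.sum_eq_single (σ i0)] at hp2
    · rcases mul_eq_zero.mp hp2.symm with h | h
      · rw [map_eq_zero] at h
        exact absurd h hψ0
      · exact h
    · intro j _ hj
      rw [hψc j hj, map_zero, zero_mul]
    · intro h
      exact absurd (Finset.mem_univ _) h
  -- the norm of v
  have hpsum : ∑ z ∈ Sᶜ, ‖ψ z‖ ^ 2 = 1 - p := by
    have := Finset.sum_add_sum_compl S (fun z => ‖ψ z‖ ^ 2)
    rw [hψnorm] at this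
    have hps : ∑ z ∈ S, ‖ψ z‖ ^ 2 = p := rfl
    linarith
  have hnv : ∑ z, ‖v z‖ ^ 2 = p * (1 - p) := by
    rw [← Finset.sum_add_sum_compl S]
    have hS1 : ∑ z ∈ S, ‖v z‖ ^ 2 = (1 - p) ^ 2 * p := by
      have hterm : ∀ z ∈ S, ‖v z‖ ^ 2 = (1 - p) ^ 2 * ‖ψ z‖ ^ 2 := by
        intro z hz
        have hvz : v z = ((1 - p : ℝ) : ℂ) * ψ z := by
          simp only [hv, Pi.sub_apply, Pi.smul_apply, smul_eq_mul, hφ, if_pos hz]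
          push_cast
          ring
        rw [hvz, norm_mul, mul_pow, Complex.norm_real, Real.norm_eq_abs, sq_abs]
      rw [Finset.sum_congr rfl hterm, ← Finset.mul_sum]
      rfl
    have hS2 : ∑ z ∈ Sᶜ, ‖v z‖ ^ 2 = p ^ 2 * (1 - p) := by
      have hterm : ∀ z ∈ Sᶜ, ‖v z‖ ^ 2 = p ^ 2 * ‖ψ z‖ ^ 2 := by
        intro z hz
        rw [Finset.mem_compl] at hz
        have hvz : v z = -(((p : ℝ)) : ℂ) * ψ z := by
          simp only [hv, Pi.sub_apply, Pi.smul_apply, smul_eq_mul, hφ, if_neg hz]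
          ring
        rw [hvz, norm_mul, mul_pow, norm_neg, Complex.norm_real, Real.norm_eq_abs, sq_abs]
      rw [Finset.sum_congr rfl hterm, ← Finset.mul_sum, hpsum]
    rw [hS1, hS2]
    ring
  -- variational lower bound
  have hvar : (E 1 - E 0) * (p * (1 - p)) ≤ (beta H (E 0) v v).re := by
    rw [beta_re hH]
    calc (E 1 - E 0) * (p * (1 - p))
        = ∑ j, (E 1 - E 0) * ‖coord hH v j‖ ^ 2 := by
          rw [← Finset.mul_sum, ← parseval_norm hH v, hnv]
      _ ≤ ∑ j, (hH.eigenvalues j - E 0) * ‖coord hH v j‖ ^ 2 := by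
          refine Finset.sum_le_sum fun j _ => ?_
          by_cases hj : j = σ i0
          · rw [hj, hcv0]
            norm_num
          · exact mul_le_mul_of_nonneg_right (by linarith [hgt j hj]) (sq_nonneg _)
  -- nonnegativity of the quadratic form
  have hQnonneg : ∀ x : B → ℂ, 0 ≤ (beta H (E 0) x x).re := by
    intro x
    rw [beta_re hH]
    exact Finset.sum_nonneg fun j _ =>
      mul_nonneg (sub_nonneg.mpr (hEmin j)) (sq_nonneg _)
  -- Cauchy-Schwarz step
  have hQle : (beta H (E 0) φ φ).re ≤ (beta H (E 0) dφ dφ).re := by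
    have h1 : (beta H (E 0) φ φ).re
        ≤ Real.sqrt ((beta H (E 0) dφ dφ).re) * Real.sqrt ((beta H (E 0) φ φ).re) := by
      calc (beta H (E 0) φ φ).re = (beta H (E 0) dφ φ).re := by rw [hβφdφ]
        _ ≤ _ := beta_re_cs hH (E 0) hEmin dφ φ
    by_cases h0 : (beta H (E 0) φ φ).re = 0
    · rw [h0]
      exact hQnonneg dφ
    · have hpos : 0 < (beta H (E 0) φ φ).re := lt_of_le_of_ne (hQnonneg φ) (Ne.symm h0)
      have hsq : Real.sqrt ((beta H (E 0) φ φ).re) ≤ Real.sqrt ((beta H (E 0) dφ dφ).re) := by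
        have h2 : Real.sqrt ((beta H (E 0) φ φ).re) * Real.sqrt ((beta H (E 0) φ φ).re)
            ≤ Real.sqrt ((beta H (E 0) dφ dφ).re) * Real.sqrt ((beta H (E 0) φ φ).re) := by
          rw [Real.mul_self_sqrt (hQnonneg φ)]
          exact h1
        exact le_of_mul_le_mul_right h2 (Real.sqrt_pos.mpr hpos)
      calc (beta H (E 0) φ φ).re
          = Real.sqrt ((beta H (E 0) φ φ).re) * Real.sqrt ((beta H (E 0) φ φ).re) :=
            (Real.mul_self_sqrt (hQnonneg φ)).symm
        _ ≤ Real.sqrt ((beta H (E 0) dφ dφ).re) * Real.sqrt ((beta H (E 0) dφ dφ).re) :=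
            mul_le_mul hsq hsq (Real.sqrt_nonneg _) (Real.sqrt_nonneg _)
        _ = (beta H (E 0) dφ dφ).re := Real.mul_self_sqrt (hQnonneg dφ)
  -- upper bound on the boundary quadratic form
  have hnd : ∑ z, ‖dφ z‖ ^ 2 = piS ψ (bdry H S) := by
    have hterm : ∀ z, ‖dφ z‖ ^ 2 = if z ∈ bdry H S then ‖ψ z‖ ^ 2 else 0 := by
      intro z
      by_cases h : z ∈ bdry H S <;> simp [hdφ, h]
    simp_rw [hterm]
    rw [Finset.sum_ite_mem, Finset.univ_inter]
    rfl
  have hQd_le : (beta H (E 0) dφ dφ).re ≤ (opNorm H - E 0) * piS ψ (bdry H S) := by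
    rw [beta_re hH]
    calc ∑ j, (hH.eigenvalues j - E 0) * ‖coord hH dφ j‖ ^ 2
        ≤ ∑ j, (opNorm H - E 0) * ‖coord hH dφ j‖ ^ 2 := by
          refine Finset.sum_le_sum fun j _ => ?_
          exact mul_le_mul_of_nonneg_right (by linarith [hEmax j]) (sq_nonneg _)
      _ = (opNorm H - E 0) * ∑ j, ‖coord hH dφ j‖ ^ 2 := by rw [Finset.mul_sum]
      _ = (opNorm H - E 0) * ∑ z, ‖dφ z‖ ^ 2 := by rw [← parseval_norm hH]
      _ = (opNorm H - E 0) * piS ψ (bdry H S) := by rw [hnd]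
  -- assemble
  have key : (E 1 - E 0) * (p * (1 - p)) ≤ (opNorm H - E 0) * piS ψ (bdry H S) := by
    calc (E 1 - E 0) * (p * (1 - p)) ≤ (beta H (E 0) v v).re := hvar
      _ = (beta H (E 0) φ φ).re := by rw [hβvφ]
      _ ≤ (beta H (E 0) dφ dφ).re := hQle
      _ ≤ (opNorm H - E 0) * piS ψ (bdry H S) := hQd_le
  have hhint : 0 ≤ (E 1 - E 0) * (p * (1 - 2 * p)) :=
    mul_nonneg (by linarith) (mul_nonneg hS0.le (by linarith))
  have hfin : (E 1 - E 0) * p ≤ 2 * ((opNorm H - E 0) * piS ψ (bdry H S)) := by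
    nlinarith [key, hhint]
  rw [show 2 * (opNorm H - E 0) * (piS ψ (bdry H S) / p)
      = 2 * ((opNorm H - E 0) * piS ψ (bdry H S)) / p by ring]
  rw [le_div_iff₀ hS0]
  linarith [hfin]
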